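/- Let (p,q) ∈ ℝ² satisfy the Diophantine condition and let τ ∈ ℂ with Im τ > 0. Then for every nonzero σ = (σ₁,σ₂) ∈ ℂ² there exists λ = (λ₁,λ₂) in Λ₀ such that the scalar product ⟨σ,λ⟩ = σ₁λ₁ + σ₂λ₂ is not an integer. (By the toroidal group criterion, this means ℂ²/Λ₀ is a toroidal group.) -/

import Mathlib

open Complex

/-- A pair `(p, q)` of real numbers satisfies the Diophantine condition. -/
def DiophantineCondition (p q : ℝ) : Prop :=
  ∃ ϑ : ℝ, 0 < ϑ ∧ ∃ A : ℝ, 0 < A ∧ ∀ n : ℕ, 0 < n → ∀ μ ν : ℤ,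
    A * (n : ℝ) ^ (-ϑ) ≤
      ‖(n : ℂ) * ((p : ℂ) + (q : ℂ) * Complex.I) - ((μ : ℂ) + (ν : ℂ) * Complex.I)‖

/-- The lattice `Λ₀`: the additive subgroup of `ℂ²` generated by `(0,1)`, `(1,p)`, `(τ,q)`. -/
noncomputable def Lambda0 (p q : ℝ) (τ : ℂ) : AddSubgroup (ℂ × ℂ) :=
  AddSubgroup.closure {((0 : ℂ), (1 : ℂ)), ((1 : ℂ), (p : ℂ)), (τ, (q : ℂ))}

/-- If `(p, q)` satisfies the Diophantine condition and `Im τ > 0`, then for every nonzero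
`σ ∈ ℂ²` there exists `λ ∈ Λ₀` whose scalar product `σ₁λ₁ + σ₂λ₂` with `σ` is not an
integer; by the toroidal group criterion, `ℂ²/Λ₀` is a toroidal group. -/
theorem exists_nonintegral_pairing_of_diophantine (p q : ℝ) (τ : ℂ)
    (hpq : DiophantineCondition p q) (hτ : 0 < τ.im) :
    ∀ σ : ℂ × ℂ, σ ≠ 0 →
      ∃ l ∈ Lambda0 p q τ, ¬ ∃ k : ℤ, (k : ℂ) = σ.1 * l.1 + σ.2 * l.2 := by
  obtain ⟨ϑ, hϑ, A, hA, hdio⟩ := hpq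
  intro σ hσ
  by_contra h
  push_neg at h
  have hmem : ∀ x ∈ ({((0 : ℂ), (1 : ℂ)), ((1 : ℂ), (p : ℂ)), (τ, (q : ℂ))} : Set (ℂ × ℂ)),
      x ∈ Lambda0 p q τ := fun x hx => AddSubgroup.subset_closure hx
  obtain ⟨k₁, hk₁⟩ := h _ (hmem ((0 : ℂ), (1 : ℂ)) (by simp))
  obtain ⟨k₂, hk₂⟩ := h _ (hmem ((1 : ℂ), (p : ℂ)) (by simp))
  obtain ⟨k₃, hk₃⟩ := h _ (hmem (τ, (q : ℂ)) (by simp))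
  simp only [mul_zero, mul_one, zero_add] at hk₁ hk₂
  -- σ.2 = k₁, σ.1 = k₂ - k₁ p
  have hσ2 : σ.2 = (k₁ : ℂ) := hk₁.symm
  have hσ1 : σ.1 = (k₂ : ℂ) - (k₁ : ℂ) * (p : ℂ) := by
    rw [hσ2] at hk₂; linear_combination -hk₂
  -- plug into third equation
  have hk₃' : (k₃ : ℂ) = (((k₂ : ℝ) - (k₁ : ℝ) * p : ℝ) : ℂ) * τ + (((k₁ : ℝ) * q : ℝ) : ℂ) := by
    rw [hk₃, hσ1, hσ2]; push_cast; ring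
  have him := congrArg Complex.im hk₃'
  simp only [Complex.intCast_im, Complex.add_im, Complex.mul_im, Complex.ofReal_re,
    Complex.ofReal_im, zero_mul, add_zero, mul_zero] at him
  have hc0 : (k₂ : ℝ) - (k₁ : ℝ) * p = 0 := by
    rcases mul_eq_zero.mp him.symm with h' | h'
    · exact h'
    · exact absurd h' (ne_of_gt hτ)
  have hp : (k₁ : ℝ) * p = (k₂ : ℝ) := by linarith
  have hq : (k₁ : ℝ) * q = (k₃ : ℝ) := by
    have hre := congrArg Complex.re hk₃'
    rw [hc0] at hre
    simpa using hre.symm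
  by_cases hk₁0 : k₁ = 0
  · -- then σ = 0, contradiction
    have hk₂0 : (k₂ : ℝ) = 0 := by rw [← hp, hk₁0]; simp
    have : σ = 0 := by
      have h2 : (k₂ : ℤ) = 0 := by exact_mod_cast hk₂0
      apply Prod.ext
      · rw [hσ1, hk₁0, h2]; simp
      · rw [hσ2, hk₁0]; simp
    exact hσ this
  · -- Diophantine contradiction with n = |k₁|
    have key : (k₁ : ℂ) * ((p : ℂ) + (q : ℂ) * Complex.I) = (k₂ : ℂ) + (k₃ : ℂ) * Complex.I := by
      calc (k₁ : ℂ) * ((p : ℂ) + (q : ℂ) * Complex.I)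
          = (((k₁ : ℝ) * p : ℝ) : ℂ) + (((k₁ : ℝ) * q : ℝ) : ℂ) * Complex.I := by
            push_cast; ring
        _ = (k₂ : ℂ) + (k₃ : ℂ) * Complex.I := by rw [hp, hq]; push_cast; ring
    set n : ℕ := k₁.natAbs with hn
    have hnpos : 0 < n := Int.natAbs_pos.mpr hk₁0
    have hpos : 0 < A * (n : ℝ) ^ (-ϑ) :=
      mul_pos hA (Real.rpow_pos_of_pos (by exact_mod_cast hnpos) _)
    rcases lt_or_gt_of_ne hk₁0 with hlt | hlt
    · -- k₁ < 0 : use μ = -k₂, ν = -k₃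
      have hcast : ((n : ℤ) : ℂ) = -(k₁ : ℂ) := by
        have : (n : ℤ) = -k₁ := by
          rw [hn]; omega
        rw [this]; push_cast; ring
      have h0 : ((n : ℂ) * ((p : ℂ) + (q : ℂ) * Complex.I)
          - (((-k₂ : ℤ) : ℂ) + ((-k₃ : ℤ) : ℂ) * Complex.I)) = 0 := by
        have : ((n : ℕ) : ℂ) = -(k₁ : ℂ) := by exact_mod_cast hcast
        rw [this]
        push_cast
        linear_combination -key
      have := hdio n hnpos (-k₂) (-k₃)
      rw [h0] at this
      simp only [norm_zero] at this
      linarith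
    · -- 0 < k₁ : use μ = k₂, ν = k₃
      have hcast : ((n : ℕ) : ℂ) = (k₁ : ℂ) := by
        have : (n : ℤ) = k₁ := by rw [hn]; omega
        exact_mod_cast this
      have h0 : ((n : ℂ) * ((p : ℂ) + (q : ℂ) * Complex.I)
          - ((k₂ : ℂ) + (k₃ : ℂ) * Complex.I)) = 0 := by
        rw [hcast, key]; ring
      have := hdio n hnpos k₂ k₃
      rw [h0] at this
      simp only [norm_zero] at this
      linarith
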